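/- Let T > 0. There exists a constant c_T > 0 such that for every sequence of real numbers (λ_n)_{n∈ℕ} and every finitely supported sequence of complex numbers (a_n)_{n∈ℕ}, one has ∫₀^T |Σ_n a_n e^{i λ_n t}|² dt ≤ c_T Σ_{l ∈ ℤ} ( Σ_{n : |λ_n − l| ≤ 1/2} |a_n| )². -/

import Mathlib

open Real MeasureTheory

noncomputable section AOEproof
open intervalIntegral Finset

lemma integral_exp_int (k : ℤ) :
    (∫ t in (0:ℝ)..(2*π), Complex.exp (Complex.I * (k:ℂ) * t)) =
      if k = 0 then ((2*π : ℝ) : ℂ) else 0 := by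
  rcases eq_or_ne k 0 with hk | hk
  · simp [hk]
  · have hc : Complex.I * (k:ℂ) ≠ 0 :=
      mul_ne_zero Complex.I_ne_zero (Int.cast_ne_zero.2 hk)
    have h1 : ∀ t : ℝ, Complex.I * (k:ℂ) * t = (Complex.I * (k:ℂ)) * (t:ℂ) := fun t => by ring
    rw [if_neg hk]
    calc (∫ t in (0:ℝ)..(2*π), Complex.exp (Complex.I * (k:ℂ) * t))
        = (Complex.exp ((Complex.I * (k:ℂ)) * ((2*π:ℝ):ℂ)) -
            Complex.exp ((Complex.I * (k:ℂ)) * ((0:ℝ):ℂ))) / (Complex.I * (k:ℂ)) :=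
          integral_exp_mul_complex hc
      _ = 0 := by
          rw [show (Complex.I * (k:ℂ)) * ((2*π:ℝ):ℂ) = (k:ℂ) * (2*(π:ℂ)*Complex.I) by
                push_cast; ring,
              Complex.exp_int_mul_two_pi_mul_I]
          simp

lemma norm_integral_exp_le (μ : ℝ) :
    ‖∫ t in (0:ℝ)..(2*π), Complex.exp (Complex.I * (μ:ℂ) * t)‖ ≤ 2*π := by
  have := intervalIntegral.norm_integral_le_of_norm_le_const
    (a := 0) (b := 2*π) (C := 1)
    (f := fun t : ℝ => Complex.exp (Complex.I * (μ:ℂ) * t)) ?_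
  · calc ‖∫ t in (0:ℝ)..(2*π), Complex.exp (Complex.I * (μ:ℂ) * t)‖
        ≤ 1 * |2*π - 0| := this
    _ = 2*π := by rw [one_mul, sub_zero, abs_of_nonneg (by positivity)]
  · intro x _
    rw [Complex.norm_exp]
    simp

lemma cs_integral (g : ℝ → ℝ) (hg : Continuous g) (b : ℝ) (hb : 0 ≤ b) :
    (∫ u in (0:ℝ)..b, g u)^2 ≤ b * ∫ u in (0:ℝ)..b, (g u)^2 := by
  set A := ∫ u in (0:ℝ)..b, g u with hA
  set B := ∫ u in (0:ℝ)..b, (g u)^2 with hB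
  have hig : IntervalIntegrable g volume 0 b := hg.intervalIntegrable _ _
  have hig2 : IntervalIntegrable (fun u => (g u)^2) volume 0 b :=
    (hg.pow 2).intervalIntegrable _ _
  have key : ∀ u : ℝ, g u * A ≤ (b * (g u)^2 + B) / 2 := by
    intro u
    have h1 : g u * A = ∫ v in (0:ℝ)..b, g u * g v := by
      rw [intervalIntegral.integral_const_mul]
    have h2 : (∫ v in (0:ℝ)..b, g u * g v) ≤ ∫ v in (0:ℝ)..b, ((g u)^2 + (g v)^2)/2 := by
      apply intervalIntegral.integral_mono_on hb
      · exact (continuous_const.mul hg).intervalIntegrable _ _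
      · exact ((continuous_const.add (hg.pow 2)).div_const 2).intervalIntegrable _ _
      · intro v _
        nlinarith [sq_nonneg (g u - g v)]
    have h3 : (∫ v in (0:ℝ)..b, ((g u)^2 + (g v)^2)/2) = (b * (g u)^2 + B)/2 := by
      rw [show (fun v => ((g u)^2 + (g v)^2)/2) = fun v => (g u)^2/2 + (g v)^2 * (1/2) by
        funext v; ring]
      rw [intervalIntegral.integral_add (f := fun _ => (g u)^2/2) (g := fun v => (g v)^2 * (1/2)) ((continuous_const : Continuous fun _ : ℝ => (g u)^2/2).intervalIntegrable _ _)
        (((hg.pow 2).mul continuous_const : Continuous fun v => (g v)^2 * (1/2)).intervalIntegrable _ _)]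
      rw [intervalIntegral.integral_const, intervalIntegral.integral_mul_const]
      simp only [smul_eq_mul, sub_zero]
      ring
    linarith [h1, h2, h3.symm ▸ h2]
  have h4 : A * A = ∫ u in (0:ℝ)..b, g u * A := by
    rw [intervalIntegral.integral_mul_const]
  have h5 : (∫ u in (0:ℝ)..b, g u * A) ≤ ∫ u in (0:ℝ)..b, (b * (g u)^2 + B)/2 := by
    apply intervalIntegral.integral_mono_on hb
    · exact (hg.mul continuous_const).intervalIntegrable _ _
    · exact ((continuous_const.mul (hg.pow 2)).add continuous_const).div_const 2
        |>.intervalIntegrable _ _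
    · intro u _; exact key u
  have h6 : (∫ u in (0:ℝ)..b, (b * (g u)^2 + B)/2) = (b * B + b * B)/2 := by
    rw [show (fun u => (b * (g u)^2 + B)/2) = fun u => (g u)^2 * (b/2) + B/2 by
      funext u; ring]
    rw [intervalIntegral.integral_add (f := fun u => (g u)^2 * (b/2)) (g := fun _ => B/2) (((hg.pow 2).mul continuous_const : Continuous fun u => (g u)^2 * (b/2)).intervalIntegrable _ _)
      ((continuous_const : Continuous fun _ : ℝ => B/2).intervalIntegrable _ _)]
    rw [intervalIntegral.integral_mul_const, intervalIntegral.integral_const]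
    simp only [smul_eq_mul, sub_zero]
    ring
  calc A^2 = A * A := sq A
    _ ≤ (b * B + b * B)/2 := by rw [h4]; rw [h6] at h5; exact h5
    _ = b * B := by ring

lemma sq_norm_eq (z : ℂ) : ‖z‖^2 = (z * (starRingEnd ℂ) z).re := by
  rw [Complex.mul_conj, Complex.ofReal_re, Complex.normSq_eq_norm_sq]

lemma innerEq (s : Finset ℕ) (d : ℕ → ℝ → ℂ) (r : ℕ → ℤ) (hc : ∀ n, Continuous (d n)) (t : ℝ) :
    (∫ u in (0:ℝ)..2*π, ‖∑ n ∈ s, d n u * Complex.exp (Complex.I * (r n : ℂ) * t)‖^2)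
    = (∑ n ∈ s, ∑ m ∈ s, (∫ u in (0:ℝ)..2*π, d n u * (starRingEnd ℂ) (d m u)) *
        Complex.exp (Complex.I * ((r n : ℂ) - (r m : ℂ)) * t)).re := by
  set e : ℕ → ℂ := fun n => Complex.exp (Complex.I * (r n : ℂ) * t) with he_def
  have he : ∀ n m, e n * (starRingEnd ℂ) (e m)
      = Complex.exp (Complex.I * ((r n : ℂ) - (r m : ℂ)) * t) := by
    intro n m
    rw [he_def]
    simp only [← Complex.exp_conj, map_mul, Complex.conj_I, Complex.conj_ofReal, map_intCast]
    rw [← Complex.exp_add]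
    ring_nf
  have key : ∀ u : ℝ, ‖∑ n ∈ s, d n u * e n‖^2
      = ((∑ n ∈ s, ∑ m ∈ s, (d n u * (starRingEnd ℂ) (d m u)) * (e n * (starRingEnd ℂ) (e m)))).re := by
    intro u
    rw [sq_norm_eq, map_sum (starRingEnd ℂ) (fun n => d n u * e n) s, Finset.sum_mul_sum]
    congr 1
    refine Finset.sum_congr rfl fun n _ => Finset.sum_congr rfl fun m _ => ?_
    rw [map_mul]
    ring
  have key' : ∀ u : ℝ, ‖∑ n ∈ s, d n u * Complex.exp (Complex.I * (r n : ℂ) * t)‖^2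
      = ((∑ n ∈ s, ∑ m ∈ s, (d n u * (starRingEnd ℂ) (d m u)) * (e n * (starRingEnd ℂ) (e m)))).re := key
  simp only [key']
  have hFcont : Continuous (fun u => ∑ n ∈ s, ∑ m ∈ s,
      (d n u * (starRingEnd ℂ) (d m u)) * (e n * (starRingEnd ℂ) (e m))) := by
    refine continuous_finset_sum _ fun n _ => continuous_finset_sum _ fun m _ => ?_
    exact (((hc n).mul ((hc m).star)).mul continuous_const)
  have hInt : IntervalIntegrable (fun u => ∑ n ∈ s, ∑ m ∈ s,
      (d n u * (starRingEnd ℂ) (d m u)) * (e n * (starRingEnd ℂ) (e m))) volume 0 (2*π) :=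
    hFcont.intervalIntegrable _ _
  have := Complex.reCLM.intervalIntegral_comp_comm hInt
  simp only [Complex.reCLM_apply] at this
  rw [this]
  congr 1
  rw [intervalIntegral.integral_finset_sum]
  swap
  · exact fun n _ => (continuous_finset_sum _ fun m _ =>
      (((hc n).mul ((hc m).star)).mul continuous_const)).intervalIntegrable _ _
  refine Finset.sum_congr rfl fun n _ => ?_
  rw [intervalIntegral.integral_finset_sum]
  swap
  · exact fun m _ => ((((hc n).mul ((hc m).star)).mul continuous_const)).intervalIntegrable _ _
  refine Finset.sum_congr rfl fun m _ => ?_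
  rw [intervalIntegral.integral_mul_const, he]

lemma master (s : Finset ℕ) (d : ℕ → ℝ → ℂ) (r : ℕ → ℤ) (hc : ∀ n, Continuous (d n))
    (C : ℕ → ℝ) (hC : ∀ n u, ‖d n u‖ ≤ C n) :
    (∫ t in (0:ℝ)..2*π, ∫ u in (0:ℝ)..2*π,
        ‖∑ n ∈ s, d n u * Complex.exp (Complex.I * (r n : ℂ) * t)‖^2)
    ≤ (2*π)^2 * ∑ n ∈ s, ∑ m ∈ s, (if r n = r m then C n * C m else 0) := by
  have hC0 : ∀ n, 0 ≤ C n := fun n => le_trans (norm_nonneg _) (hC n 0)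
  simp only [innerEq s d r hc]
  set z : ℕ → ℕ → ℂ := fun n m => ∫ u in (0:ℝ)..2*π, d n u * (starRingEnd ℂ) (d m u) with hz
  have hzle : ∀ n m, ‖z n m‖ ≤ C n * C m * (2*π) := by
    intro n m
    have : ‖z n m‖ ≤ (C n * C m) * |2*π - 0| := by
      apply intervalIntegral.norm_integral_le_of_norm_le_const
      intro x _
      rw [norm_mul, RCLike.norm_conj]
      exact mul_le_mul (hC n x) (hC m x) (norm_nonneg _) (hC0 n)
    simpa [abs_of_nonneg (by positivity : (0:ℝ) ≤ 2*π)] using this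
  have hIntSum : IntervalIntegrable (fun t => ∑ n ∈ s, ∑ m ∈ s,
      z n m * Complex.exp (Complex.I * ((r n : ℂ) - (r m : ℂ)) * t)) volume 0 (2*π) := by
    apply Continuous.intervalIntegrable
    exact continuous_finset_sum _ fun n _ => continuous_finset_sum _ fun m _ =>
      continuous_const.mul (by fun_prop)
  have := Complex.reCLM.intervalIntegral_comp_comm hIntSum
  simp only [Complex.reCLM_apply] at this
  rw [this]
  have hval : (∫ t in (0:ℝ)..2*π, ∑ n ∈ s, ∑ m ∈ s,
      z n m * Complex.exp (Complex.I * ((r n : ℂ) - (r m : ℂ)) * t))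
      = ∑ n ∈ s, ∑ m ∈ s, z n m * (if r n = r m then ((2*π:ℝ):ℂ) else 0) := by
    rw [intervalIntegral.integral_finset_sum]
    swap
    · exact fun n _ => (continuous_finset_sum _ fun m _ =>
        continuous_const.mul (by fun_prop)).intervalIntegrable _ _
    refine Finset.sum_congr rfl fun n _ => ?_
    rw [intervalIntegral.integral_finset_sum]
    swap
    · exact fun m _ => (continuous_const.mul (by fun_prop : Continuous fun t : ℝ =>
        Complex.exp (Complex.I * ((r n : ℂ) - (r m : ℂ)) * t))).intervalIntegrable _ _
    refine Finset.sum_congr rfl fun m _ => ?_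
    rw [intervalIntegral.integral_const_mul]
    congr 1
    have : ((r n : ℂ) - (r m : ℂ)) = ((r n - r m : ℤ) : ℂ) := by push_cast; ring
    rw [this, integral_exp_int (r n - r m)]
    simp [sub_eq_zero]
  rw [hval]
  calc (∑ n ∈ s, ∑ m ∈ s, z n m * (if r n = r m then ((2*π:ℝ):ℂ) else 0)).re
      ≤ ‖∑ n ∈ s, ∑ m ∈ s, z n m * (if r n = r m then ((2*π:ℝ):ℂ) else 0)‖ :=
        Complex.re_le_norm _
    _ ≤ ∑ n ∈ s, ∑ m ∈ s, ‖z n m * (if r n = r m then ((2*π:ℝ):ℂ) else 0)‖ := by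
        refine le_trans (norm_sum_le _ _) (Finset.sum_le_sum fun n _ => norm_sum_le _ _)
    _ ≤ ∑ n ∈ s, ∑ m ∈ s, (2*π)^2 * (if r n = r m then C n * C m else 0) := by
        refine Finset.sum_le_sum fun n _ => Finset.sum_le_sum fun m _ => ?_
        by_cases h : r n = r m
        · simp only [h, if_true, if_pos]
          rw [norm_mul]
          have h2 : ‖((2*π:ℝ):ℂ)‖ = 2*π := by
            rw [Complex.norm_real, Real.norm_eq_abs, abs_of_nonneg (by positivity)]
          rw [h2]
          calc ‖z n m‖ * (2*π) ≤ (C n * C m * (2*π)) * (2*π) :=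
                mul_le_mul_of_nonneg_right (hzle n m) (by positivity)
            _ = (2*π)^2 * (C n * C m) := by ring
        · simp [h]
    _ = (2*π)^2 * ∑ n ∈ s, ∑ m ∈ s, (if r n = r m then C n * C m else 0) := by
        rw [Finset.mul_sum]
        exact Finset.sum_congr rfl fun n _ => by rw [Finset.mul_sum]

lemma L0 (lam : ℕ → ℝ) (a : ℕ → ℂ) (s : Finset ℕ) :
    (∫ t in (0:ℝ)..2*π, ‖∑ n ∈ s, a n * Complex.exp (Complex.I * (lam n : ℂ) * t)‖^2)
    ≤ (4*π + 4*π^3) * ∑ n ∈ s, ∑ m ∈ s,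
        (if round (lam n) = round (lam m) then ‖a n‖ * ‖a m‖ else 0) := by
  have hπ : (0:ℝ) < π := Real.pi_pos
  set r : ℕ → ℤ := fun n => round (lam n) with hr
  set μ : ℕ → ℝ := fun n => lam n - r n with hμdef
  have hμ : ∀ n, |μ n| ≤ 1/2 := fun n => abs_sub_round (lam n)
  set f : ℝ → ℂ := fun t => ∑ n ∈ s, a n * Complex.exp (Complex.I * (lam n : ℂ) * t) with hf
  set P : ℝ → ℂ := fun t => ∑ n ∈ s, a n * Complex.exp (Complex.I * (r n : ℂ) * t) with hP
  set h : ℝ → ℝ → ℂ := fun u t => ∑ n ∈ s,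
      (a n * (Complex.I * (μ n : ℂ)) * Complex.exp (Complex.I * (μ n : ℂ) * u)) *
        Complex.exp (Complex.I * (r n : ℂ) * t) with hh
  have hfc : Continuous f := continuous_finset_sum _ fun n _ => by fun_prop
  have hPc : Continuous P := continuous_finset_sum _ fun n _ => by fun_prop
  have hhc : ∀ t, Continuous (fun u => h u t) := fun t =>
    continuous_finset_sum _ fun n _ => by fun_prop
  -- pointwise decomposition
  have hQ : ∀ t : ℝ, f t - P t = ∫ u in (0:ℝ)..t, h u t := by
    intro t
    have hint : ∀ n ∈ s, IntervalIntegrable (fun u =>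
        (a n * (Complex.I * (μ n : ℂ)) * Complex.exp (Complex.I * (μ n : ℂ) * u)) *
          Complex.exp (Complex.I * (r n : ℂ) * t)) volume 0 t :=
      fun n _ => (by fun_prop : Continuous _).intervalIntegrable _ _
    rw [hh]
    simp only
    rw [intervalIntegral.integral_finset_sum hint, hf, hP, ← Finset.sum_sub_distrib]
    refine Finset.sum_congr rfl fun n _ => ?_
    have hrewr : (fun u : ℝ => (a n * (Complex.I * (μ n : ℂ)) *
        Complex.exp (Complex.I * (μ n : ℂ) * u)) * Complex.exp (Complex.I * (r n : ℂ) * t))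
        = fun u : ℝ => (a n * (Complex.I * (μ n : ℂ)) * Complex.exp (Complex.I * (r n : ℂ) * t)) *
            Complex.exp ((Complex.I * (μ n : ℂ)) * u) := by
      funext u; ring_nf
    rw [hrewr, intervalIntegral.integral_const_mul]
    have hlam : (lam n : ℝ) = (r n : ℝ) + μ n := by rw [hμdef]; ring
    by_cases h0 : μ n = 0
    · have : (lam n : ℝ) = (r n : ℝ) := by rw [hlam, h0, add_zero]
      simp [h0, this]
    · have hc0 : Complex.I * (μ n : ℂ) ≠ 0 :=
        mul_ne_zero Complex.I_ne_zero (Complex.ofReal_ne_zero.2 h0)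
      rw [integral_exp_mul_complex hc0]
      have hexp : Complex.exp (Complex.I * (lam n : ℂ) * t)
          = Complex.exp (Complex.I * (r n : ℂ) * t) * Complex.exp (Complex.I * (μ n : ℂ) * t) := by
        rw [← Complex.exp_add]
        congr 1
        have : (lam n : ℂ) = (r n : ℂ) + (μ n : ℂ) := by
          rw [← Complex.ofReal_intCast, ← Complex.ofReal_add, hlam]
        rw [this]; ring
      rw [hexp]
      simp only [Complex.ofReal_zero, mul_zero, Complex.exp_zero]
      have hμc : (μ n : ℂ) ≠ 0 := Complex.ofReal_ne_zero.2 h0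
      field_simp
  -- bound for P
  have hPbound : (∫ t in (0:ℝ)..2*π, ‖P t‖^2)
      ≤ (2*π) * ∑ n ∈ s, ∑ m ∈ s, (if r n = r m then ‖a n‖ * ‖a m‖ else 0) := by
    have hm := master s (fun n _ => a n) r (fun n => continuous_const)
      (fun n => ‖a n‖) (fun n u => le_refl _)
    have heq : (∫ t in (0:ℝ)..2*π, ∫ u in (0:ℝ)..2*π,
        ‖∑ n ∈ s, a n * Complex.exp (Complex.I * (r n : ℂ) * t)‖^2)
        = (2*π) * ∫ t in (0:ℝ)..2*π, ‖P t‖^2 := by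
      rw [← intervalIntegral.integral_const_mul]
      refine intervalIntegral.integral_congr fun t _ => ?_
      rw [intervalIntegral.integral_const]
      simp [hP, smul_eq_mul]
    rw [heq] at hm
    beta_reduce at hm
    have h2π : (0:ℝ) < 2*π := by positivity
    nlinarith [hm]
  -- Q bound
  set Q : ℝ → ℂ := fun t => f t - P t with hQdef
  have hQc : Continuous Q := hfc.sub hPc
  set d : ℕ → ℝ → ℂ := fun n u =>
    a n * (Complex.I * (μ n : ℂ)) * Complex.exp (Complex.I * (μ n : ℂ) * u) with hd_def
  have hd : ∀ n, Continuous (d n) := fun n => by fun_prop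
  set G : ℝ → ℝ := fun t => (∑ n ∈ s, ∑ m ∈ s,
      (∫ u in (0:ℝ)..2*π, d n u * (starRingEnd ℂ) (d m u)) *
        Complex.exp (Complex.I * ((r n : ℂ) - (r m : ℂ)) * t)).re with hG_def
  have hGeq : ∀ t, (∫ u in (0:ℝ)..2*π, ‖h u t‖^2) = G t := fun t => innerEq s d r hd t
  have hGc : Continuous G := by
    apply Complex.continuous_re.comp
    exact continuous_finset_sum _ fun n _ => continuous_finset_sum _ fun m _ =>
      continuous_const.mul (by fun_prop)
  have hQptwise : ∀ t ∈ Set.Icc (0:ℝ) (2*π), ‖Q t‖^2 ≤ (2*π) * G t := by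
    intro t ht
    have h0t : (0:ℝ) ≤ t := ht.1
    have ht2 : t ≤ 2*π := ht.2
    have e1 : ‖Q t‖ ≤ ∫ u in (0:ℝ)..t, ‖h u t‖ := by
      have : Q t = ∫ u in (0:ℝ)..t, h u t := hQ t
      rw [this]
      exact intervalIntegral.norm_integral_le_integral_norm h0t
    have e2 : (∫ u in (0:ℝ)..t, ‖h u t‖) ≤ ∫ u in (0:ℝ)..2*π, ‖h u t‖ := by
      apply intervalIntegral.integral_mono_interval le_rfl h0t ht2
      · exact Filter.Eventually.of_forall fun u => norm_nonneg _
      · exact ((hhc t).norm).intervalIntegrable _ _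
    have e3 : ‖Q t‖^2 ≤ (∫ u in (0:ℝ)..2*π, ‖h u t‖)^2 :=
      pow_le_pow_left₀ (norm_nonneg _) (e1.trans e2) 2
    have e4 := cs_integral (fun u => ‖h u t‖) ((hhc t).norm) (2*π) (by positivity)
    rw [← hGeq t]
    beta_reduce at e4
    exact e3.trans e4
  have hQbound : (∫ t in (0:ℝ)..2*π, ‖Q t‖^2) ≤ (2*π) * ∫ t in (0:ℝ)..2*π, G t := by
    rw [← intervalIntegral.integral_const_mul]
    exact intervalIntegral.integral_mono_on (by positivity)
      ((hQc.norm.pow 2).intervalIntegrable _ _)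
      ((continuous_const.mul hGc).intervalIntegrable _ _) hQptwise
  have hCd : ∀ n u, ‖d n u‖ ≤ ‖a n‖ * (1/2) := by
    intro n u
    rw [hd_def]
    have h2 : (Complex.I * (μ n : ℂ) * u).re = 0 := by
      simp [Complex.mul_re, Complex.mul_im]
    simp only [norm_mul, Complex.norm_exp, h2,
      Real.exp_zero, mul_one, Complex.norm_I, one_mul, Complex.norm_real, Real.norm_eq_abs]
    exact mul_le_mul_of_nonneg_left (hμ n) (norm_nonneg _)
  have hGint : (∫ t in (0:ℝ)..2*π, G t)
      ≤ (2*π)^2 * ∑ n ∈ s, ∑ m ∈ s,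
          (if r n = r m then (‖a n‖*(1/2)) * (‖a m‖*(1/2)) else 0) := by
    have hm := master s d r hd (fun n => ‖a n‖ * (1/2)) hCd
    have heq : (∫ t in (0:ℝ)..2*π, ∫ u in (0:ℝ)..2*π,
        ‖∑ n ∈ s, d n u * Complex.exp (Complex.I * (r n : ℂ) * t)‖^2)
        = ∫ t in (0:ℝ)..2*π, G t := by
      refine intervalIntegral.integral_congr fun t _ => ?_
      exact hGeq t
    rw [heq] at hm
    beta_reduce at hm
    exact hm
  have hquarter : (∑ n ∈ s, ∑ m ∈ s, (if r n = r m then (‖a n‖*(1/2)) * (‖a m‖*(1/2)) else 0))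
      = (1/4) * ∑ n ∈ s, ∑ m ∈ s, (if r n = r m then ‖a n‖ * ‖a m‖ else 0) := by
    rw [Finset.mul_sum]
    refine Finset.sum_congr rfl fun n _ => ?_
    rw [Finset.mul_sum]
    refine Finset.sum_congr rfl fun m _ => ?_
    by_cases hnm : r n = r m
    · rw [if_pos hnm, if_pos hnm]; ring
    · rw [if_neg hnm, if_neg hnm]; ring
  set S : ℝ := ∑ n ∈ s, ∑ m ∈ s, (if r n = r m then ‖a n‖ * ‖a m‖ else 0) with hS
  have hQtotal : (∫ t in (0:ℝ)..2*π, ‖Q t‖^2) ≤ (2*π) * ((2*π)^2 * ((1/4) * S)) := by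
    refine hQbound.trans ?_
    apply mul_le_mul_of_nonneg_left _ (by positivity : (0:ℝ) ≤ 2*π)
    rw [← hquarter]
    exact hGint
  -- combine
  have hsplit : (∫ t in (0:ℝ)..2*π, ‖f t‖^2)
      ≤ 2 * (∫ t in (0:ℝ)..2*π, ‖P t‖^2) + 2 * (∫ t in (0:ℝ)..2*π, ‖Q t‖^2) := by
    have hmono : (∫ t in (0:ℝ)..2*π, ‖f t‖^2)
        ≤ ∫ t in (0:ℝ)..2*π, (2 * ‖P t‖^2 + 2 * ‖Q t‖^2) := by
      apply intervalIntegral.integral_mono_on (by positivity)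
        ((hfc.norm.pow 2).intervalIntegrable _ _)
        (((continuous_const.mul (hPc.norm.pow 2)).add
          (continuous_const.mul (hQc.norm.pow 2))).intervalIntegrable _ _)
      intro t _
      have hfPQ : f t = P t + Q t := by rw [hQdef]; ring
      have hn : ‖f t‖ ≤ ‖P t‖ + ‖Q t‖ := by rw [hfPQ]; exact norm_add_le _ _
      show ‖f t‖^2 ≤ 2 * ‖P t‖^2 + 2 * ‖Q t‖^2
      nlinarith [hn, norm_nonneg (f t), norm_nonneg (P t), norm_nonneg (Q t), sq_nonneg (‖P t‖ - ‖Q t‖)]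
    rw [intervalIntegral.integral_add (f := fun t => 2 * ‖P t‖^2) (g := fun t => 2 * ‖Q t‖^2)
      ((continuous_const.mul (hPc.norm.pow 2) : Continuous fun t => 2 * ‖P t‖^2).intervalIntegrable _ _)
      ((continuous_const.mul (hQc.norm.pow 2) : Continuous fun t => 2 * ‖Q t‖^2).intervalIntegrable _ _),
      intervalIntegral.integral_const_mul, intervalIntegral.integral_const_mul] at hmono
    exact hmono
  calc (∫ t in (0:ℝ)..2*π, ‖f t‖^2)
      ≤ 2 * (∫ t in (0:ℝ)..2*π, ‖P t‖^2) + 2 * (∫ t in (0:ℝ)..2*π, ‖Q t‖^2) := hsplit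
    _ ≤ 2 * ((2*π) * S) + 2 * ((2*π) * ((2*π)^2 * ((1/4) * S))) := by
        linarith [hQtotal, hPbound]
    _ = (4*π + 4*π^3) * S := by ring

lemma pairSum (s : Finset ℕ) (F : ℕ → ℝ) (r : ℕ → ℤ) :
    (∑ n ∈ s, ∑ m ∈ s, if r n = r m then F n * F m else 0)
    = ∑ l ∈ s.image r, (∑ n ∈ s, if r n = l then F n else 0)^2 := by
  symm
  calc ∑ l ∈ s.image r, (∑ n ∈ s, if r n = l then F n else 0)^2
      = ∑ l ∈ s.image r, ∑ n ∈ s, ∑ m ∈ s,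
          ((if r n = l then F n else 0) * (if r m = l then F m else 0)) := by
        refine Finset.sum_congr rfl fun l _ => ?_
        rw [sq, Finset.sum_mul_sum]
    _ = ∑ n ∈ s, ∑ m ∈ s, ∑ l ∈ s.image r,
          ((if r n = l then F n else 0) * (if r m = l then F m else 0)) := by
        rw [Finset.sum_comm]
        exact Finset.sum_congr rfl fun n _ => Finset.sum_comm
    _ = ∑ n ∈ s, ∑ m ∈ s, (if r n = r m then F n * F m else 0) := by
        refine Finset.sum_congr rfl fun n hn => Finset.sum_congr rfl fun m hm => ?_
        simp only [ite_mul, zero_mul, mul_ite, mul_zero]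
        rw [Finset.sum_ite_eq (s.image r) (r m)
          (fun l => if r n = l then F n * F m else 0)]
        rw [if_pos (Finset.mem_image_of_mem r hm)]

lemma chunks (lam : ℕ → ℝ) (a : ℕ → ℂ) (s : Finset ℕ) (T : ℝ) (hT : 0 < T) :
    (∫ t in (0:ℝ)..T, ‖∑ n ∈ s, a n * Complex.exp (Complex.I * (lam n : ℂ) * t)‖^2)
    ≤ ((⌈T / (2*π)⌉₊ : ℝ) * (4*π + 4*π^3)) * ∑ n ∈ s, ∑ m ∈ s,
        (if round (lam n) = round (lam m) then ‖a n‖ * ‖a m‖ else 0) := by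
  have hπ : (0:ℝ) < π := Real.pi_pos
  set K := ⌈T / (2*π)⌉₊ with hK
  set f : ℝ → ℂ := fun t => ∑ n ∈ s, a n * Complex.exp (Complex.I * (lam n : ℂ) * t) with hf
  have hfc : Continuous f := continuous_finset_sum _ fun n _ => by fun_prop
  set F : ℝ → ℝ := fun t => ‖f t‖^2 with hF
  have hFc : Continuous F := hfc.norm.pow 2
  set g : ℕ → ℝ := fun k => 2*π*k with hg
  have hTK : T ≤ g K := by
    have h1 : T / (2*π) ≤ (K:ℝ) := Nat.le_ceil _
    rw [hg]
    calc T = (T / (2*π)) * (2*π) := by field_simp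
      _ ≤ (K:ℝ) * (2*π) := mul_le_mul_of_nonneg_right h1 (by positivity)
      _ = 2*π*(K:ℝ) := by ring
  set S : ℝ := ∑ n ∈ s, ∑ m ∈ s,
      (if round (lam n) = round (lam m) then ‖a n‖ * ‖a m‖ else 0) with hS
  have hSnn : 0 ≤ S := by
    refine Finset.sum_nonneg fun n _ => Finset.sum_nonneg fun m _ => ?_
    by_cases h : round (lam n) = round (lam m)
    · rw [if_pos h]; positivity
    · rw [if_neg h]
  have step1 : (∫ t in (0:ℝ)..T, F t) ≤ ∫ t in (0:ℝ)..(g K), F t := by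
    apply intervalIntegral.integral_mono_interval le_rfl hT.le hTK
    · exact Filter.Eventually.of_forall fun t => by positivity
    · exact hFc.intervalIntegrable _ _
  have step2 : (∫ t in (g 0)..(g K), F t) = ∑ k ∈ Finset.range K, ∫ t in (g k)..(g (k+1)), F t :=
    (intervalIntegral.sum_integral_adjacent_intervals
      (fun k _ => hFc.intervalIntegrable _ _)).symm
  have step3 : ∀ k : ℕ, (∫ t in (g k)..(g (k+1)), F t) ≤ (4*π + 4*π^3) * S := by
    intro k
    have hshift : (∫ x in (0:ℝ)..2*π, F (x + g k)) = ∫ t in (g k)..(g (k+1)), F t := by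
      rw [intervalIntegral.integral_comp_add_right F (g k)]
      congr 1
      · rw [hg]; simp
      · rw [hg]; push_cast; ring
    rw [← hshift]
    have hptwise : ∀ x : ℝ, F (x + g k)
        = ‖∑ n ∈ s, (a n * Complex.exp (Complex.I * (lam n : ℂ) * (g k))) *
            Complex.exp (Complex.I * (lam n : ℂ) * x)‖^2 := by
      intro x
      rw [hF, hf]
      simp only
      have harg : ∀ n : ℕ, a n * Complex.exp (Complex.I * (lam n : ℂ) * ((x + g k : ℝ):ℂ))
          = (a n * Complex.exp (Complex.I * (lam n : ℂ) * ((g k : ℝ):ℂ))) *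
              Complex.exp (Complex.I * (lam n : ℂ) * (x:ℂ)) := by
        intro n
        rw [show Complex.I * (lam n : ℂ) * ((x + g k : ℝ):ℂ)
            = Complex.I * (lam n:ℂ) * ((g k:ℝ):ℂ) + Complex.I * (lam n:ℂ) * (x:ℂ) by
          push_cast; ring, Complex.exp_add]
        ring
      rw [Finset.sum_congr rfl fun n _ => harg n]
    rw [intervalIntegral.integral_congr (fun x _ => hptwise x)]
    have := L0 lam (fun n => a n * Complex.exp (Complex.I * (lam n : ℂ) * (g k))) s
    refine this.trans ?_
    apply mul_le_mul_of_nonneg_left _ (by positivity : (0:ℝ) ≤ 4*π + 4*π^3)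
    rw [hS]
    apply le_of_eq
    refine Finset.sum_congr rfl fun n _ => Finset.sum_congr rfl fun m _ => ?_
    by_cases h : round (lam n) = round (lam m)
    · rw [if_pos h, if_pos h]
      have hnorm : ∀ j : ℕ, ‖a j * Complex.exp (Complex.I * (lam j : ℂ) * (g k))‖ = ‖a j‖ := by
        intro j
        rw [norm_mul, Complex.norm_exp]
        have : (Complex.I * (lam j : ℂ) * (g k : ℝ)).re = 0 := by
          simp [Complex.mul_re, Complex.mul_im]
        rw [this, Real.exp_zero, mul_one]
      rw [hnorm n, hnorm m]
    · rw [if_neg h, if_neg h]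
  calc (∫ t in (0:ℝ)..T, F t)
      ≤ ∫ t in (0:ℝ)..(g K), F t := step1
    _ = ∑ k ∈ Finset.range K, ∫ t in (g k)..(g (k+1)), F t := by
        rw [← step2]
        congr 1
        rw [hg]; simp
    _ ≤ ∑ k ∈ Finset.range K, (4*π + 4*π^3) * S :=
        Finset.sum_le_sum fun k _ => step3 k
    _ = ((K:ℝ) * (4*π + 4*π^3)) * S := by
        rw [Finset.sum_const, Finset.card_range]
        simp [nsmul_eq_mul]; ring

theorem almost_orthogonality_exponentials (T : ℝ) (hT : 0 < T) :
    ∃ c > (0 : ℝ), ∀ lam : ℕ → ℝ, ∀ a : ℕ → ℂ,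
      (Function.support a).Finite →
      (∫ t in (0:ℝ)..T, ‖∑' n : ℕ, a n * Complex.exp (Complex.I * (lam n : ℂ) * (t : ℂ))‖ ^ 2)
        ≤ c * ∑' l : ℤ, (∑' n : ℕ, if |lam n - (l : ℝ)| ≤ 1 / 2 then ‖a n‖ else 0) ^ 2 := by
  have hπ : (0:ℝ) < π := Real.pi_pos
  refine ⟨(⌈T / (2*π)⌉₊ : ℝ) * (4*π + 4*π^3), ?_, ?_⟩
  · have hK : 0 < ⌈T / (2*π)⌉₊ := Nat.ceil_pos.2 (by positivity)
    have : (0:ℝ) < (⌈T / (2*π)⌉₊ : ℝ) := by exact_mod_cast hK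
    positivity
  intro lam a hfin
  set s : Finset ℕ := hfin.toFinset with hs
  have ha0 : ∀ n, n ∉ s → a n = 0 := by
    intro n hn
    by_contra hab
    exact hn (hfin.mem_toFinset.2 (Function.mem_support.2 hab))
  -- tsum to finite sum, LHS
  have htsum1 : ∀ t : ℝ, (∑' n : ℕ, a n * Complex.exp (Complex.I * (lam n : ℂ) * (t : ℂ)))
      = ∑ n ∈ s, a n * Complex.exp (Complex.I * (lam n : ℂ) * (t : ℂ)) := by
    intro t
    refine tsum_eq_sum fun n hn => ?_
    rw [ha0 n hn, zero_mul]
  -- tsum to finite sum, inner RHS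
  have htsum2 : ∀ l : ℤ, (∑' n : ℕ, if |lam n - (l : ℝ)| ≤ 1 / 2 then ‖a n‖ else 0)
      = ∑ n ∈ s, if |lam n - (l : ℝ)| ≤ 1 / 2 then ‖a n‖ else 0 := by
    intro l
    refine tsum_eq_sum fun n hn => ?_
    rw [ha0 n hn]
    simp
  set W : ℤ → ℝ := fun l => (∑ n ∈ s, if |lam n - (l : ℝ)| ≤ 1 / 2 then ‖a n‖ else 0)^2 with hW
  set Fs : Finset ℤ := s.biUnion (fun n => Finset.Icc ⌈lam n - 1/2⌉ ⌊lam n + 1/2⌋) with hFs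
  have hWzero : ∀ l : ℤ, l ∉ Fs → W l = 0 := by
    intro l hl
    rw [hW]
    simp only
    have : ∀ n ∈ s, (if |lam n - (l : ℝ)| ≤ 1 / 2 then ‖a n‖ else 0) = 0 := by
      intro n hn
      rw [if_neg]
      intro habs
      apply hl
      rw [hFs]
      refine Finset.mem_biUnion.2 ⟨n, hn, ?_⟩
      rw [Finset.mem_Icc]
      rw [abs_le] at habs
      constructor
      · rw [Int.ceil_le]; linarith [habs.2]
      · rw [Int.le_floor]; linarith [habs.1]
    rw [Finset.sum_eq_zero this]
    norm_num
  have hWsummable : Summable W := summable_of_ne_finset_zero hWzero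
  have hWnn : ∀ l : ℤ, 0 ≤ W l := fun l => sq_nonneg _
  -- main chain
  have hchunks := chunks lam a s T hT
  have hpair := pairSum s (fun n => ‖a n‖) (fun n => round (lam n))
  have hcompare : (∑ l ∈ s.image (fun n => round (lam n)),
      (∑ n ∈ s, if round (lam n) = l then ‖a n‖ else 0)^2)
      ≤ ∑' l : ℤ, W l := by
    have h1 : ∀ l : ℤ, (∑ n ∈ s, if round (lam n) = l then ‖a n‖ else 0)^2 ≤ W l := by
      intro l
      rw [hW]
      simp only
      have hle : (∑ n ∈ s, if round (lam n) = l then ‖a n‖ else 0)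
          ≤ ∑ n ∈ s, if |lam n - (l : ℝ)| ≤ 1 / 2 then ‖a n‖ else 0 := by
        refine Finset.sum_le_sum fun n _ => ?_
        by_cases h : round (lam n) = l
        · rw [if_pos h, if_pos]
          have := abs_sub_round (lam n)
          rw [h] at this
          exact this
        · rw [if_neg h]
          by_cases h2 : |lam n - (l : ℝ)| ≤ 1/2
          · rw [if_pos h2]; exact norm_nonneg _
          · rw [if_neg h2]
      have hnn : 0 ≤ ∑ n ∈ s, if round (lam n) = l then ‖a n‖ else 0 := by
        refine Finset.sum_nonneg fun n _ => ?_
        by_cases h : round (lam n) = l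
        · rw [if_pos h]; exact norm_nonneg _
        · rw [if_neg h]
      exact pow_le_pow_left₀ hnn hle 2
    calc (∑ l ∈ s.image (fun n => round (lam n)),
        (∑ n ∈ s, if round (lam n) = l then ‖a n‖ else 0)^2)
        ≤ ∑ l ∈ s.image (fun n => round (lam n)), W l :=
          Finset.sum_le_sum fun l _ => h1 l
      _ ≤ ∑' l : ℤ, W l := Summable.sum_le_tsum _ (fun l _ => hWnn l) hWsummable
  have hcnn : (0:ℝ) ≤ (⌈T / (2*π)⌉₊ : ℝ) * (4*π + 4*π^3) := by positivity
  calc (∫ t in (0:ℝ)..T, ‖∑' n : ℕ, a n * Complex.exp (Complex.I * (lam n : ℂ) * (t : ℂ))‖ ^ 2)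
      = ∫ t in (0:ℝ)..T, ‖∑ n ∈ s, a n * Complex.exp (Complex.I * (lam n : ℂ) * (t:ℂ))‖ ^ 2 := by
        refine intervalIntegral.integral_congr fun t _ => ?_
        rw [htsum1 t]
    _ ≤ ((⌈T / (2*π)⌉₊ : ℝ) * (4*π + 4*π^3)) * ∑ n ∈ s, ∑ m ∈ s,
          (if round (lam n) = round (lam m) then ‖a n‖ * ‖a m‖ else 0) := hchunks
    _ = ((⌈T / (2*π)⌉₊ : ℝ) * (4*π + 4*π^3)) * ∑ l ∈ s.image (fun n => round (lam n)),
          (∑ n ∈ s, if round (lam n) = l then ‖a n‖ else 0)^2 := by rw [hpair]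
    _ ≤ ((⌈T / (2*π)⌉₊ : ℝ) * (4*π + 4*π^3)) * ∑' l : ℤ, W l :=
          mul_le_mul_of_nonneg_left hcompare hcnn
    _ = ((⌈T / (2*π)⌉₊ : ℝ) * (4*π + 4*π^3)) *
          ∑' l : ℤ, (∑' n : ℕ, if |lam n - (l : ℝ)| ≤ 1 / 2 then ‖a n‖ else 0) ^ 2 := by
        congr 1
        refine tsum_congr fun l => ?_
        rw [hW, htsum2 l]

end AOEproof
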